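/- arXiv:1212.3815 — 3 statements merged into one kernel-verified Lean document; each statement's English description precedes it below -/
import Mathlib

section
/- Let Γ be a finite simple connected graph, C ⊆ V nonempty, and let μ₀ > μ₁ > … > μ_{d_C} be the eigenvalues of Γ with nonzero C-multiplicity. Then the eccentricity of C satisfies ε_C ≤ d_C, where ε_C = max_{i∈V} dist(i, C). -/
open Finset Polynomial BigOperators
open scoped Classical

noncomputable section

/-- The eigenspace of a real matrix `A` (viewed as an operator on Euclidean space)
for the value `μ`. -/
def eigSp {n : ℕ} (A : Matrix (Fin n) (Fin n) ℝ) (μ : ℝ) :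
    Submodule ℝ (EuclideanSpace ℝ (Fin n)) :=
  Module.End.eigenspace (Matrix.toEuclideanLin A) μ

/-- Orthogonal projection onto the `μ`-eigenspace of `A`. -/
def eigProj {n : ℕ} (A : Matrix (Fin n) (Fin n) ℝ) (μ : ℝ) (v : EuclideanSpace ℝ (Fin n)) :
    EuclideanSpace ℝ (Fin n) :=
  (Submodule.orthogonalProjectionOnto (eigSp A μ) v : EuclideanSpace ℝ (Fin n))

/-- The weighted characteristic vector `ρS = Σ_{i∈S} ν_i e_i`. -/
def rho {n : ℕ} (ν : EuclideanSpace ℝ (Fin n)) (S : Finset (Fin n)) :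
    EuclideanSpace ℝ (Fin n) :=
  WithLp.toLp 2 (fun i => if i ∈ S then ν i else 0)

/-- The unit vector `e_S = ρS / ‖ρS‖`. -/
def unitVec {n : ℕ} (ν : EuclideanSpace ℝ (Fin n)) (S : Finset (Fin n)) :
    EuclideanSpace ℝ (Fin n) :=
  (‖rho ν S‖)⁻¹ • rho ν S

/-- The `S`-local multiplicity of `μ`: `m_S(μ) = ‖E_μ e_S‖²`. -/
def mloc {n : ℕ} (A : Matrix (Fin n) (Fin n) ℝ) (ν : EuclideanSpace ℝ (Fin n))
    (S : Finset (Fin n)) (μ : ℝ) : ℝ :=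
  ‖eigProj A μ (unitVec ν S)‖ ^ 2

/-- The `S`-local spectrum: the set of `μ` whose eigenspace sees `ρS`. -/
def evloc {n : ℕ} (A : Matrix (Fin n) (Fin n) ℝ) (ν : EuclideanSpace ℝ (Fin n))
    (S : Finset (Fin n)) : Set ℝ :=
  {μ | eigProj A μ (rho ν S) ≠ 0}

/-- Distance from a vertex `i` to a set of vertices `S`. -/
def dSet {n : ℕ} (G : SimpleGraph (Fin n)) (S : Finset (Fin n)) (i : Fin n) : ℕ :=
  sInf {k | ∃ j ∈ S, G.dist i j = k}

/-- Eccentricity (covering radius) of a vertex set `S`. -/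
def eccS {n : ℕ} (G : SimpleGraph (Fin n)) (S : Finset (Fin n)) : ℕ :=
  Finset.univ.sup (dSet G S)

/-- The `k`-th subconstituent `S_k = {i : dist(i,S) = k}`. -/
def subcons {n : ℕ} (G : SimpleGraph (Fin n)) (S : Finset (Fin n)) (k : ℕ) :
    Finset (Fin n) :=
  Finset.univ.filter (fun i => dSet G S i = k)

/-- `p(A)·v` for a polynomial `p`, a matrix `A` and a Euclidean vector `v`. -/
def aevalVec {n : ℕ} (A : Matrix (Fin n) (Fin n) ℝ) (p : Polynomial ℝ)
    (v : EuclideanSpace ℝ (Fin n)) : EuclideanSpace ℝ (Fin n) :=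
  WithLp.toLp 2 ((Polynomial.aeval A p).mulVec v)

/-- Moment-like parameter `π_l = ∏_{h≠l} |μ_l − μ_h|` for an enumeration `μ`. -/
def piC {d : ℕ} (μ : Fin (d + 1) → ℝ) (l : Fin (d + 1)) : ℝ :=
  ∏ h ∈ Finset.univ.erase l, |μ l - μ h|

namespace EccAux

variable {n : ℕ}

theorem eucl_sum_apply {N : ℕ} (g : Fin N → ℝ) (w : Fin N → EuclideanSpace ℝ (Fin n)) (i : Fin n) :
    (∑ m, g m • w m) i = ∑ m, g m * (w m i) := by
  have := map_sum (WithLp.linearEquiv 2 ℝ (Fin n → ℝ)) (fun m => g m • w m) univ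
  calc (∑ m, g m • w m) i
      = (∑ m : Fin N, (fun j => g m * w m j : Fin n → ℝ)) i := congrFun this i
    _ = ∑ m, g m * w m i := Finset.sum_apply _ _ _

variable (G : SimpleGraph (Fin n)) [DecidableRel G.Adj]

/-- dSet is attained. -/
theorem dSet_exists (C : Finset (Fin n)) (hC : C.Nonempty) (i : Fin n) :
    ∃ j ∈ C, G.dist i j = sInf {k | ∃ j ∈ C, G.dist i j = k} := by
  obtain ⟨j0, hj0⟩ := hC
  have hne : {k | ∃ j ∈ C, G.dist i j = k}.Nonempty := ⟨G.dist i j0, j0, hj0, rfl⟩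
  exact Nat.sInf_mem hne

theorem dSet_le (C : Finset (Fin n)) {j : Fin n} (hj : j ∈ C) (i : Fin n) :
    sInf {k | ∃ j ∈ C, G.dist i j = k} ≤ G.dist i j :=
  Nat.sInf_le ⟨j, hj, rfl⟩

theorem exists_dSet_eq (hconn : G.Connected) (C : Finset (Fin n)) (hC : C.Nonempty) :
    ∀ s : ℕ, ∀ i : Fin n, sInf {k | ∃ j ∈ C, G.dist i j = k} = s →
      ∀ m ≤ s, ∃ i', sInf {k | ∃ j ∈ C, G.dist i' j = k} = m := by
  intro s
  induction s with
  | zero => intro i hi m hm; exact ⟨i, by omega⟩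
  | succ s ih =>
    intro i hi m hm
    rcases Nat.eq_or_lt_of_le hm with h | h
    · exact ⟨i, by omega⟩
    · -- find a vertex at distance s
      obtain ⟨j, hj, hd⟩ := dSet_exists G C hC i
      rw [hi] at hd
      obtain ⟨p, hp⟩ := (hconn i j).exists_walk_length_eq_dist
      rw [hd] at hp
      cases p with
      | nil => simp at hp
      | @cons _ i'' _ hadj q =>
        have hq : q.length = s := by simpa using hp
        have h1 : sInf {k | ∃ j ∈ C, G.dist i'' j = k} ≤ s := by
          refine le_trans (dSet_le G C hj i'') ?_
          exact hq ▸ SimpleGraph.dist_le q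
        have h2 : s ≤ sInf {k | ∃ j ∈ C, G.dist i'' j = k} := by
          obtain ⟨k, hk, hdk⟩ := dSet_exists G C hC i''
          rw [← hdk]
          have htri : G.dist i k ≤ G.dist i i'' + G.dist i'' k := hconn.dist_triangle
          have hii : G.dist i i'' ≤ 1 := by
            simpa using SimpleGraph.dist_le (SimpleGraph.Walk.cons hadj SimpleGraph.Walk.nil)
          have hik : s + 1 ≤ G.dist i k := by
            have := dSet_le G C hk i
            rw [hi] at this
            omega
          omega
        exact ih i'' (le_antisymm h1 h2) m (by omega)

theorem pow_entry_eq_card (m : ℕ) (i j : Fin n) :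
    ((G.adjMatrix ℝ) ^ m) i j = (Fintype.card {p : G.Walk i j | p.length = m} : ℝ) :=
  G.adjMatrix_pow_apply_eq_card_walk m i j

theorem pow_entry_nonneg (m : ℕ) (i j : Fin n) : 0 ≤ ((G.adjMatrix ℝ) ^ m) i j := by
  rw [pow_entry_eq_card]; positivity

theorem pow_entry_zero {m : ℕ} {i j : Fin n} (h : m < G.dist i j) :
    ((G.adjMatrix ℝ) ^ m) i j = 0 := by
  rw [pow_entry_eq_card]
  norm_cast
  rw [Fintype.card_eq_zero_iff]
  constructor
  rintro ⟨p, hp⟩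
  have : G.dist i j ≤ m := hp ▸ SimpleGraph.dist_le p
  omega

theorem pow_entry_pos (hconn : G.Connected) {m : ℕ} {i j : Fin n} (h : G.dist i j = m) :
    0 < ((G.adjMatrix ℝ) ^ m) i j := by
  rw [pow_entry_eq_card]
  norm_cast
  rw [Fintype.card_pos_iff]
  obtain ⟨p, hp⟩ := (hconn i j).exists_walk_length_eq_dist
  exact ⟨⟨p, by simp [Set.mem_setOf_eq, hp, h]⟩⟩

end EccAux

set_option maxHeartbeats 1600000 in
theorem eccentricity_le_dual_degree {n : ℕ} (hn : 0 < n) (G : SimpleGraph (Fin n)) [DecidableRel G.Adj]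
    (hconn : G.Connected)
    (ν : EuclideanSpace ℝ (Fin n)) (hν : ∀ i, 0 < ν i) (lam0 : ℝ)
    (hPerron : (G.adjMatrix ℝ).mulVec ν = lam0 • ν)
    (C : Finset (Fin n)) (hC : C.Nonempty) : eccS G C + 1 ≤ (evloc (G.adjMatrix ℝ) ν C).ncard := by
  classical
  set Amat : Matrix (Fin n) (Fin n) ℝ := G.adjMatrix ℝ with hAmat
  set ρ : EuclideanSpace ℝ (Fin n) := rho ν C with hρ
  -- coordinates of A^m ρ
  have hmulVec : ∀ (m : ℕ) (i : Fin n),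
      ((Amat ^ m).mulVec ρ) i = ∑ j ∈ C, ((Amat ^ m) i j) * ν j := by
    intro m i
    simp only [Matrix.mulVec, dotProduct, hρ, rho, mul_ite, mul_zero]
    rw [Finset.sum_ite_mem, Finset.univ_inter]
  have hcoord_zero : ∀ (m : ℕ) (i : Fin n), m < dSet G C i → ((Amat ^ m).mulVec ρ) i = 0 := by
    intro m i him
    rw [hmulVec]
    refine Finset.sum_eq_zero fun j hj => ?_
    have : m < G.dist i j := lt_of_lt_of_le him (EccAux.dSet_le G C hj i)
    rw [EccAux.pow_entry_zero G this, zero_mul]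
  have hcoord_pos : ∀ (m : ℕ) (i : Fin n), dSet G C i = m → 0 < ((Amat ^ m).mulVec ρ) i := by
    intro m i him
    rw [hmulVec]
    obtain ⟨j0, hj0, hdj0⟩ := EccAux.dSet_exists G C hC i
    refine Finset.sum_pos' (fun j hj => mul_nonneg (EccAux.pow_entry_nonneg G m i j) (hν j).le)
      ⟨j0, hj0, mul_pos (EccAux.pow_entry_pos G hconn (by rw [hdj0]; exact him)) (hν j0)⟩
  -- spectral setup
  have hherm : Amat.IsHermitian := by
    unfold Matrix.IsHermitian
    ext i j
    simp [hAmat, Matrix.conjTranspose_apply, SimpleGraph.adjMatrix_apply, SimpleGraph.adj_comm]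
  have hsym : (Matrix.toEuclideanLin Amat).IsSymmetric :=
    Matrix.isHermitian_iff_isSymmetric.mp hherm
  set T : EuclideanSpace ℝ (Fin n) →ₗ[ℝ] EuclideanSpace ℝ (Fin n) := Matrix.toEuclideanLin Amat
    with hT
  have hrank : Module.finrank ℝ (EuclideanSpace ℝ (Fin n)) = n := finrank_euclideanSpace_fin
  set b : OrthonormalBasis (Fin n) ℝ (EuclideanSpace ℝ (Fin n)) := hsym.eigenvectorBasis hrank
    with hb
  set eval : Fin n → ℝ := hsym.eigenvalues hrank with heval
  have hb_eig : ∀ i, b i ∈ eigSp Amat (eval i) :=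
    fun i => (hsym.hasEigenvector_eigenvectorBasis hrank i).1
  set c : Fin n → ℝ := fun i => (inner ℝ (b i) ρ : ℝ) with hc
  have hrho_repr : ρ = ∑ i, c i • b i := (b.sum_repr' ρ).symm
  -- projection of basis vectors
  have hproj_b : ∀ (μ : ℝ) (i : Fin n),
      eigProj Amat μ (b i) = if eval i = μ then b i else 0 := by
    intro μ i
    by_cases h : eval i = μ
    · rw [if_pos h]
      exact Submodule.starProjection_eq_self_iff.mpr (h ▸ hb_eig i)
    · rw [if_neg h]
      have hmem : b i ∈ (eigSp Amat μ)ᗮ := by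
        rw [Submodule.mem_orthogonal]
        intro u hu
        exact hsym.orthogonalFamily_eigenspaces (Ne.symm h) ⟨u, hu⟩ ⟨b i, hb_eig i⟩
      rw [eigProj, Submodule.orthogonalProjectionOnto_apply_of_mem_orthogonal hmem]
      rfl
  -- projection of ρ
  have hfμ : ∀ μ : ℝ, eigProj Amat μ ρ =
      ∑ i ∈ univ.filter (fun i => eval i = μ), c i • b i := by
    intro μ
    have h1 : eigProj Amat μ ρ = ∑ i, c i • eigProj Amat μ (b i) := by
      rw [eigProj]
      conv_lhs => rw [hrho_repr]
      rw [map_sum]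
      push_cast [Submodule.coe_sum]
      refine Finset.sum_congr rfl fun i _ => ?_
      rw [map_smul]
      rfl
    rw [h1, Finset.sum_filter]
    refine Finset.sum_congr rfl fun i _ => ?_
    rw [hproj_b]
    split_ifs <;> simp
  set Dfin : Finset ℝ := (univ.filter fun i => c i ≠ 0).image eval with hDfin
  -- evloc = Dfin
  have hevloc : evloc Amat ν C = (Dfin : Set ℝ) := by
    ext μ
    simp only [evloc, Set.mem_setOf_eq, hDfin, Finset.coe_image, Set.mem_image,
      Finset.mem_coe, Finset.mem_filter, Finset.mem_univ, true_and]
    constructor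
    · intro hne
      by_contra hno
      push_neg at hno
      apply hne
      rw [hfμ]
      refine Finset.sum_eq_zero fun i hi => ?_
      rw [Finset.mem_filter] at hi
      rcases eq_or_ne (c i) 0 with h0 | h0
      · rw [h0, zero_smul]
      · exact absurd hi.2 (hno i h0)
    · rintro ⟨i0, hc0, he0⟩ hproj0
      rw [hfμ] at hproj0
      have hli := b.orthonormal.linearIndependent
      rw [linearIndependent_iff'] at hli
      exact hc0 (hli _ c hproj0 i0 (Finset.mem_filter.mpr ⟨Finset.mem_univ _, he0⟩))
  -- powers of T
  have hTapp : ∀ x : EuclideanSpace ℝ (Fin n), T x = Amat.mulVec x := fun _ => rfl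
  have hTpow : ∀ (m : ℕ) (x : EuclideanSpace ℝ (Fin n)), (T ^ m) x = (Amat ^ m).mulVec x := by
    intro m
    induction m with
    | zero => intro x; simp [Matrix.one_mulVec]
    | succ m ih =>
      intro x
      rw [pow_succ, pow_succ, Module.End.mul_apply, ih, hTapp, ← Matrix.mulVec_mulVec]
  have hTpow_b : ∀ (m : ℕ) (i : Fin n), (T ^ m) (b i) = (eval i) ^ m • b i := by
    intro m i
    induction m with
    | zero => simp
    | succ m ih =>
      rw [pow_succ, Module.End.mul_apply]
      have hTb : T (b i) = eval i • b i := hsym.apply_eigenvectorBasis hrank i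
      rw [hTb, map_smul, ih, smul_smul, ← pow_succ']
  set f : ℝ → EuclideanSpace ℝ (Fin n) := fun μ => eigProj Amat μ ρ with hf
  set W : Submodule ℝ (EuclideanSpace ℝ (Fin n)) :=
    Submodule.span ℝ ((Dfin.image f : Finset (EuclideanSpace ℝ (Fin n))) : Set (EuclideanSpace ℝ (Fin n))) with hW
  set S0 : Finset (Fin n) := univ.filter fun i => c i ≠ 0 with hS0
  -- key decomposition
  have hdecomp : ∀ m : ℕ, WithLp.toLp 2 ((Amat ^ m).mulVec ρ) = ∑ μ ∈ Dfin, (μ ^ m) • f μ := by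
    intro m
    have lhs1 : WithLp.toLp 2 ((Amat ^ m).mulVec ρ) = ∑ i, (eval i) ^ m • c i • b i := by
      rw [← hTpow, WithLp.toLp_ofLp]
      conv_lhs => rw [hrho_repr]
      rw [map_sum]
      refine Finset.sum_congr rfl fun i _ => ?_
      rw [map_smul, hTpow_b, smul_comm]
    have lhs2 : ∑ i, (eval i) ^ m • c i • b i = ∑ i ∈ S0, (eval i) ^ m • c i • b i := by
      symm
      refine Finset.sum_subset (Finset.subset_univ _) fun i _ hi => ?_
      have : c i = 0 := by
        by_contra hci
        exact hi (Finset.mem_filter.mpr ⟨Finset.mem_univ _, hci⟩)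
      rw [this, zero_smul, smul_zero]
    have fib : ∑ μ ∈ Dfin, ∑ i ∈ S0.filter (fun i => eval i = μ), (eval i) ^ m • c i • b i
        = ∑ i ∈ S0, (eval i) ^ m • c i • b i := by
      refine Finset.sum_fiberwise_of_maps_to (fun i hi => ?_) _
      exact Finset.mem_image_of_mem eval hi
    rw [lhs1, lhs2, ← fib]
    refine Finset.sum_congr rfl fun μ hμ => ?_
    have inner_eq : ∑ i ∈ S0.filter (fun i => eval i = μ), (eval i) ^ m • c i • b i
        = μ ^ m • ∑ i ∈ S0.filter (fun i => eval i = μ), c i • b i := by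
      rw [Finset.smul_sum]
      refine Finset.sum_congr rfl fun i hi => ?_
      rw [Finset.mem_filter] at hi
      rw [hi.2]
    rw [inner_eq]
    simp only [hf]
    rw [hfμ]
    congr 1
    refine Finset.sum_subset (fun i hi => ?_) (fun i hi hni => ?_)
    · rw [Finset.mem_filter] at hi ⊢
      exact ⟨Finset.mem_univ _, hi.2⟩
    · rw [Finset.mem_filter] at hi
      have hc0 : c i = 0 := by
        by_contra hci
        exact hni (Finset.mem_filter.mpr ⟨Finset.mem_filter.mpr ⟨Finset.mem_univ _, hci⟩, hi.2⟩)
      rw [hc0, zero_smul]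
  have hWmem : ∀ m : ℕ, WithLp.toLp 2 ((Amat ^ m).mulVec ρ) ∈ W := by
    intro m
    rw [hdecomp m]
    refine Submodule.sum_mem _ fun μ hμ => Submodule.smul_mem _ _ ?_
    exact Submodule.subset_span (by exact_mod_cast Finset.mem_image_of_mem f hμ)
  -- vertices at each distance
  set N : ℕ := eccS G C with hN
  have hvert : ∀ m : Fin (N + 1), ∃ i, dSet G C i = (m : ℕ) := by
    intro m
    obtain ⟨i0, _, hi0⟩ := Finset.exists_mem_eq_sup univ ⟨⟨0, hn⟩, Finset.mem_univ _⟩ (dSet G C)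
    exact EccAux.exists_dSet_eq G hconn C hC (dSet G C i0) i0 rfl (m : ℕ)
      (le_trans (Fin.is_le m) (le_of_eq hi0))
  choose vert hvert using hvert
  set w : Fin (N + 1) → EuclideanSpace ℝ (Fin n) := fun m => WithLp.toLp 2 ((Amat ^ (m : ℕ)).mulVec ρ) with hw
  -- linear independence
  have hli : LinearIndependent ℝ w := by
    rw [Fintype.linearIndependent_iff]
    intro g hg
    by_contra hne
    push_neg at hne
    obtain ⟨m0, hm0⟩ := hne
    set s : Finset (Fin (N + 1)) := univ.filter fun m => g m ≠ 0 with hs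
    have hsne : s.Nonempty := ⟨m0, Finset.mem_filter.mpr ⟨Finset.mem_univ _, hm0⟩⟩
    set M : Fin (N + 1) := s.max' hsne with hM
    have hMs : M ∈ s := s.max'_mem hsne
    have hgM : g M ≠ 0 := (Finset.mem_filter.mp hMs).2
    have hsum : ∑ m, g m * (w m (vert M)) = 0 := by
      rw [← EccAux.eucl_sum_apply g w (vert M), hg]
      rfl
    have hsingle : ∑ m, g m * (w m (vert M)) = g M * (w M (vert M)) := by
      refine Finset.sum_eq_single_of_mem M (Finset.mem_univ _) fun m _ hmM => ?_
      rcases lt_trichotomy (m : ℕ) (M : ℕ) with hlt | heq | hgt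
      · have : w m (vert M) = 0 := hcoord_zero (m : ℕ) (vert M) (by rw [hvert M]; exact hlt)
        rw [this, mul_zero]
      · exact absurd (Fin.ext heq) hmM
      · have : g m = 0 := by
          by_contra hgm
          have : m ∈ s := Finset.mem_filter.mpr ⟨Finset.mem_univ _, hgm⟩
          have := s.le_max' m this
          rw [← hM] at this
          omega
        rw [this, zero_mul]
    have hpos : 0 < w M (vert M) := hcoord_pos (M : ℕ) (vert M) (hvert M)
    rw [hsingle] at hsum
    exact hgM (by rcases mul_eq_zero.mp hsum with h | h; exact h; exact absurd h hpos.ne')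
  -- dimension count
  have h1 : N + 1 = Module.finrank ℝ (Submodule.span ℝ (Set.range w)) := by
    rw [finrank_span_eq_card hli, Fintype.card_fin]
  have h2 : Submodule.span ℝ (Set.range w) ≤ W := by
    rw [Submodule.span_le]
    rintro x ⟨m, rfl⟩
    exact hWmem (m : ℕ)
  have h3 : Module.finrank ℝ W ≤ (Dfin.image f).card := finrank_span_finset_le_card _
  have h4 : (Dfin.image f).card ≤ Dfin.card := Finset.card_image_le
  have h5 : (evloc Amat ν C).ncard = Dfin.card := by
    rw [hevloc, Set.ncard_coe_finset]
  have h6 : Module.finrank ℝ (Submodule.span ℝ (Set.range w)) ≤ Module.finrank ℝ W :=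
    Submodule.finrank_mono h2
  omega
end
end

section
/- Let C be an extremal set in a finite simple connected graph Γ with antipodal set D. For an eigenvalue μ_l of the C-local spectrum, equality m_C(μ_l)·m_D(μ_l) = (π₀(C)²/π_l(C)²)·(‖ρC‖²·‖ρD‖²/‖ν‖⁴) holds if and only if the projections z_C(μ_l) = E_l e_C and z_D(μ_l) = E_l e_D are linearly dependent. -/
open Finset Polynomial BigOperators
open scoped Classical

noncomputable section

open scoped RealInnerProductSpace

lemma mem_eigSp {n : ℕ} {A : Matrix (Fin n) (Fin n) ℝ} {μ : ℝ} {x : EuclideanSpace ℝ (Fin n)} :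
    x ∈ eigSp A μ ↔ A.mulVec x = μ • x := by
  rw [eigSp, Module.End.mem_eigenspace_iff, Matrix.toEuclideanLin_apply]
  constructor
  · intro h; have := congrArg WithLp.ofLp h; simpa using this
  · intro h; rw [h]; rfl

variable {n : ℕ} {A : Matrix (Fin n) (Fin n) ℝ} (hA : A.IsHermitian)

lemma basis_mem_eigSp (i : Fin n) : (hA.eigenvectorBasis i : EuclideanSpace ℝ (Fin n)) ∈ eigSp A (hA.eigenvalues i) := by
  rw [mem_eigSp]
  exact hA.mulVec_eigenvectorBasis i

-- orthogonality: eigenvectors at different eigenvalues are orthogonal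
lemma inner_basis_eq_zero {μ : ℝ} {w : EuclideanSpace ℝ (Fin n)} (hw : w ∈ eigSp A μ)
    {i : Fin n} (hi : hA.eigenvalues i ≠ μ) : ⟪hA.eigenvectorBasis i, w⟫ = 0 := by
  have hsym : (Matrix.toEuclideanLin A).IsSymmetric := Matrix.isHermitian_iff_isSymmetric.1 hA
  have h1 : ⟪Matrix.toEuclideanLin A (hA.eigenvectorBasis i), w⟫
      = ⟪hA.eigenvectorBasis i, Matrix.toEuclideanLin A w⟫ := hsym _ _
  have hb : Matrix.toEuclideanLin A (hA.eigenvectorBasis i)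
      = hA.eigenvalues i • hA.eigenvectorBasis i := Module.End.mem_eigenspace_iff.1 (basis_mem_eigSp hA i)
  have hw' : Matrix.toEuclideanLin A w = μ • w := Module.End.mem_eigenspace_iff.1 hw
  rw [hb, hw', inner_smul_left, inner_smul_right] at h1
  simp only [RCLike.star_def, conj_trivial] at h1
  have := sub_eq_zero.2 h1
  rw [← sub_mul] at this
  rcases mul_eq_zero.1 this with h | h
  · exact absurd (sub_eq_zero.1 h) hi
  · exact h

lemma eigProj_eq_sum (μ : ℝ) (v : EuclideanSpace ℝ (Fin n)) :
    eigProj A μ v = ∑ i ∈ Finset.univ.filter (fun i => hA.eigenvalues i = μ),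
      ⟪hA.eigenvectorBasis i, v⟫ • (hA.eigenvectorBasis i : EuclideanSpace ℝ (Fin n)) := by
  show (eigSp A μ).starProjection v = _
  apply Submodule.eq_starProjection_of_mem_of_inner_eq_zero
  · exact Submodule.sum_mem _ fun i hi => Submodule.smul_mem _ _
      ((Finset.mem_filter.1 hi).2 ▸ basis_mem_eigSp hA i)
  · intro w hw
    rw [inner_sub_left]
    have hv : ⟪v, w⟫ = ∑ i, ⟪v, hA.eigenvectorBasis i⟫ * ⟪hA.eigenvectorBasis i, w⟫ :=
      (hA.eigenvectorBasis.sum_inner_mul_inner v w).symm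
    rw [sub_eq_zero, hv, sum_inner, Finset.sum_filter]
    apply Finset.sum_congr rfl
    intro i _
    by_cases h : hA.eigenvalues i = μ
    · rw [if_pos h, inner_smul_left]
      simp only [RCLike.star_def, conj_trivial]
      rw [real_inner_comm]
    · simp [h, inner_basis_eq_zero hA hw h]

lemma inner_eigProj (μ : ℝ) (v w : EuclideanSpace ℝ (Fin n)) :
    ⟪eigProj A μ v, eigProj A μ w⟫ = ∑ i ∈ Finset.univ.filter (fun i => hA.eigenvalues i = μ),
      ⟪hA.eigenvectorBasis i, v⟫ * ⟪hA.eigenvectorBasis i, w⟫ := by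
  have hb : ∀ i j : Fin n, ⟪(hA.eigenvectorBasis i : EuclideanSpace ℝ (Fin n)),
      hA.eigenvectorBasis j⟫ = if i = j then (1:ℝ) else 0 :=
    fun i j => orthonormal_iff_ite.1 hA.eigenvectorBasis.orthonormal i j
  rw [eigProj_eq_sum hA, eigProj_eq_sum hA, sum_inner]
  apply Finset.sum_congr rfl
  intro i hi
  rw [inner_sum]
  simp only [real_inner_smul_left, real_inner_smul_right, hb]
  rw [Finset.sum_eq_single i]
  · simp [mul_comm]
  · intro j hj hji
    simp [Ne.symm hji]
  · intro h; exact absurd hi h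

-- coefficient vanishing: if the projection of v at eigenvalue of i is zero then ⟪b i, v⟫ = 0
lemma coeff_eq_zero_of_eigProj_eq_zero {v : EuclideanSpace ℝ (Fin n)} {i : Fin n}
    (h : eigProj A (hA.eigenvalues i) v = 0) : ⟪hA.eigenvectorBasis i, v⟫ = 0 := by
  have hb : ∀ i j : Fin n, ⟪(hA.eigenvectorBasis i : EuclideanSpace ℝ (Fin n)),
      hA.eigenvectorBasis j⟫ = if i = j then (1:ℝ) else 0 :=
    fun i j => orthonormal_iff_ite.1 hA.eigenvectorBasis.orthonormal i j
  have := congrArg (fun z => ⟪(hA.eigenvectorBasis i : EuclideanSpace ℝ (Fin n)), z⟫) h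
  rw [eigProj_eq_sum hA, inner_sum] at this
  simp only [real_inner_smul_right, hb] at this
  rw [Finset.sum_eq_single i] at this
  · simpa using this
  · intro j hj hji
    simp [Ne.symm hji]
  · intro h'
    exact absurd (by simp : i ∈ Finset.univ.filter (fun j => hA.eigenvalues j = hA.eigenvalues i)) h'

lemma mulVec_pow_eig {t : ℝ} {x : Fin n → ℝ} (hx : A.mulVec x = t • x) (k : ℕ) :
    (A ^ k).mulVec x = t ^ k • x := by
  induction k with
  | zero => simp
  | succ k ih =>
    rw [pow_succ, ← Matrix.mulVec_mulVec, hx, Matrix.mulVec_smul, ih, smul_smul, pow_succ]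
    ring_nf

lemma aeval_mulVec_eig {t : ℝ} {x : Fin n → ℝ} (hx : A.mulVec x = t • x) (p : Polynomial ℝ) :
    (Polynomial.aeval A p).mulVec x = p.eval t • x := by
  induction p using Polynomial.induction_on' with
  | add p q hp hq => rw [map_add, Matrix.add_mulVec, hp, hq, eval_add, add_smul]
  | monomial k a =>
    rw [aeval_monomial, eval_monomial, ← Algebra.smul_def, Matrix.smul_mulVec,
      mulVec_pow_eig hx, smul_smul]

def toE {m : ℕ} (x : Fin m → ℝ) : EuclideanSpace ℝ (Fin m) := WithLp.toLp 2 x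

lemma symm_inner (hA : A.IsHermitian) (v w : EuclideanSpace ℝ (Fin n)) :
    ⟪toE (A.mulVec v), w⟫ = ⟪v, toE (A.mulVec w)⟫ :=
  (Matrix.isHermitian_iff_isSymmetric.1 hA) v w

lemma pow_symm_inner (hA : A.IsHermitian) (k : ℕ) (v w : EuclideanSpace ℝ (Fin n)) :
    ⟪toE ((A ^ k).mulVec v), w⟫ = ⟪v, toE ((A ^ k).mulVec w)⟫ := by
  induction k generalizing v w with
  | zero => simp [toE, Matrix.one_mulVec]
  | succ k ih =>
    have h1 : (A ^ (k+1)).mulVec v = (A ^ k).mulVec (A.mulVec v) := by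
      rw [pow_succ, Matrix.mulVec_mulVec]
    have h2 : (A ^ (k+1)).mulVec w = A.mulVec ((A ^ k).mulVec w) := by
      rw [pow_succ', Matrix.mulVec_mulVec]
    rw [show toE ((A ^ (k+1)).mulVec v) = toE ((A ^ k).mulVec (A.mulVec v)) from congrArg toE h1,
        show toE ((A ^ (k+1)).mulVec w) = toE (A.mulVec ((A ^ k).mulVec w)) from congrArg toE h2]
    rw [show ((A ^ k).mulVec (A.mulVec v)) = ((A ^ k).mulVec (toE (A.mulVec v))) from rfl,
        ih (toE (A.mulVec v)) w]
    exact symm_inner hA v (toE ((A ^ k).mulVec w))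

lemma aeval_symm_inner (hA : A.IsHermitian) (p : Polynomial ℝ) (v w : EuclideanSpace ℝ (Fin n)) :
    ⟪toE ((Polynomial.aeval A p).mulVec v), w⟫ = ⟪v, toE ((Polynomial.aeval A p).mulVec w)⟫ := by
  induction p using Polynomial.induction_on' with
  | add p q hp hq =>
    have hv : (Polynomial.aeval A (p+q)).mulVec v
        = (Polynomial.aeval A p).mulVec v + (Polynomial.aeval A q).mulVec v := by
      rw [map_add, Matrix.add_mulVec]
    have hw : (Polynomial.aeval A (p+q)).mulVec w
        = (Polynomial.aeval A p).mulVec w + (Polynomial.aeval A q).mulVec w := by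
      rw [map_add, Matrix.add_mulVec]
    rw [congrArg toE hv, congrArg toE hw]
    rw [show toE ((Polynomial.aeval A p).mulVec v + (Polynomial.aeval A q).mulVec v)
        = toE ((Polynomial.aeval A p).mulVec v) + toE ((Polynomial.aeval A q).mulVec v) from rfl]
    rw [show toE ((Polynomial.aeval A p).mulVec w + (Polynomial.aeval A q).mulVec w)
        = toE ((Polynomial.aeval A p).mulVec w) + toE ((Polynomial.aeval A q).mulVec w) from rfl]
    rw [inner_add_left, inner_add_right, hp, hq]
  | monomial k a =>
    have hv : (Polynomial.aeval A (Polynomial.monomial k a)).mulVec v = a • ((A ^ k).mulVec v) := by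
      rw [Polynomial.aeval_monomial, ← Algebra.smul_def, Matrix.smul_mulVec]
    have hw : (Polynomial.aeval A (Polynomial.monomial k a)).mulVec w = a • ((A ^ k).mulVec w) := by
      rw [Polynomial.aeval_monomial, ← Algebra.smul_def, Matrix.smul_mulVec]
    rw [congrArg toE hv, congrArg toE hw,
      show toE (a • ((A ^ k).mulVec v)) = a • toE ((A ^ k).mulVec v) from rfl,
      show toE (a • ((A ^ k).mulVec w)) = a • toE ((A ^ k).mulVec w) from rfl,
      real_inner_smul_left, real_inner_smul_right, pow_symm_inner hA]

lemma inner_aeval_spectral (hA : A.IsHermitian) (p : Polynomial ℝ) (v w : EuclideanSpace ℝ (Fin n)) :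
    ⟪toE ((Polynomial.aeval A p).mulVec v), w⟫
      = ∑ i, p.eval (hA.eigenvalues i) * (⟪hA.eigenvectorBasis i, v⟫ * ⟪hA.eigenvectorBasis i, w⟫) := by
  rw [← hA.eigenvectorBasis.sum_inner_mul_inner (toE ((Polynomial.aeval A p).mulVec v)) w]
  apply Finset.sum_congr rfl
  intro i _
  have h1 : ⟪toE ((Polynomial.aeval A p).mulVec v), (hA.eigenvectorBasis i : EuclideanSpace ℝ (Fin n))⟫
      = ⟪v, toE ((Polynomial.aeval A p).mulVec (hA.eigenvectorBasis i))⟫ :=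
    aeval_symm_inner hA p v (hA.eigenvectorBasis i)
  have h2 : (Polynomial.aeval A p).mulVec (hA.eigenvectorBasis i)
      = p.eval (hA.eigenvalues i) • (hA.eigenvectorBasis i : Fin n → ℝ) :=
    aeval_mulVec_eig (hA.mulVec_eigenvectorBasis i) p
  rw [h1, congrArg toE h2,
    show toE (p.eval (hA.eigenvalues i) • (hA.eigenvectorBasis i : Fin n → ℝ))
      = p.eval (hA.eigenvalues i) • (hA.eigenvectorBasis i : EuclideanSpace ℝ (Fin n)) from rfl,
    real_inner_smul_right, real_inner_comm v]
  ring

lemma inner_toE {m : ℕ} (x : Fin m → ℝ) (y : EuclideanSpace ℝ (Fin m)) :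
    ⟪toE x, y⟫ = ∑ i, x i * y i := by
  simp [toE, PiLp.inner_apply, mul_comm]

lemma dist_le_of_pow_ne_zero {G : SimpleGraph (Fin n)} [DecidableRel G.Adj] {i j : Fin n} {k : ℕ}
    (h : (G.adjMatrix ℝ ^ k) i j ≠ 0) : G.dist i j ≤ k := by
  rw [SimpleGraph.adjMatrix_pow_apply_eq_card_walk] at h
  have hcard : Fintype.card { p : G.Walk i j | p.length = k } ≠ 0 := by
    intro h0; rw [h0] at h; simp at h
  have : Nonempty { p : G.Walk i j | p.length = k } := Fintype.card_pos_iff.mp (Nat.pos_of_ne_zero hcard)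
  obtain ⟨⟨p, hp⟩⟩ := this
  have := SimpleGraph.dist_le p
  simp only [Set.mem_setOf_eq] at hp
  omega

lemma entry_zero_far {G : SimpleGraph (Fin n)} [DecidableRel G.Adj] {C : Finset (Fin n)} {d : ℕ}
    {i j : Fin n} (hi : dSet G C i = d) (hj : j ∈ C) {k : ℕ} (hk : k < d) :
    (G.adjMatrix ℝ ^ k) i j = 0 := by
  by_contra h
  have h1 := dist_le_of_pow_ne_zero h
  have h2 : d ≤ G.dist i j := by
    have : G.dist i j ∈ {k | ∃ j ∈ C, G.dist i j = k} := ⟨j, hj, rfl⟩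
    have := Nat.sInf_le this
    rw [← hi]; exact this  -- careful: sInf ≤ dist gives dSet ≤ dist i.e. d ≤ dist
  omega

lemma inner_pow_rho_zero {G : SimpleGraph (Fin n)} [DecidableRel G.Adj]
    (ν : EuclideanSpace ℝ (Fin n)) {C : Finset (Fin n)} {d k : ℕ} (hk : k < d) :
    ⟪toE ((G.adjMatrix ℝ ^ k).mulVec (rho ν C)), rho ν (subcons G C d)⟫ = 0 := by
  rw [inner_toE]
  apply Finset.sum_eq_zero
  intro i _
  rcases eq_or_ne (rho ν (subcons G C d) i) 0 with h | h
  · rw [h, mul_zero]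
  · have hiD : i ∈ subcons G C d := by
      by_contra hc; exact h (by simp [rho, hc])
    have hid : dSet G C i = d := (Finset.mem_filter.1 hiD).2
    have : (G.adjMatrix ℝ ^ k).mulVec (rho ν C) i = 0 := by
      rw [Matrix.mulVec, dotProduct]
      apply Finset.sum_eq_zero
      intro j _
      rcases Finset.decidableMem j C with hj | hj
      · rw [show rho ν C j = 0 from by simp [rho, hj], mul_zero]
      · rw [entry_zero_far hid hj hk, zero_mul]
    rw [this, zero_mul]

lemma sum_mulVec {m : ℕ} {ι : Type*} (s : Finset ι) (M : ι → Matrix (Fin m) (Fin m) ℝ)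
    (x : Fin m → ℝ) : (∑ k ∈ s, M k).mulVec x = ∑ k ∈ s, (M k).mulVec x :=
  map_sum (AddMonoidHom.mk' (fun M : Matrix (Fin m) (Fin m) ℝ => M.mulVec x)
    (fun M N => Matrix.add_mulVec M N x)) M s

lemma inner_aeval_rho {G : SimpleGraph (Fin n)} [DecidableRel G.Adj]
    (ν : EuclideanSpace ℝ (Fin n)) {C : Finset (Fin n)} {d : ℕ} {q : Polynomial ℝ}
    (hq : q.natDegree ≤ d) :
    ⟪toE ((Polynomial.aeval (G.adjMatrix ℝ) q).mulVec (rho ν C)), rho ν (subcons G C d)⟫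
      = q.coeff d * ⟪toE ((G.adjMatrix ℝ ^ d).mulVec (rho ν C)), rho ν (subcons G C d)⟫ := by
  have hq' : q.natDegree < d + 1 := Nat.lt_succ_of_le hq
  rw [Polynomial.aeval_eq_sum_range' hq' (G.adjMatrix ℝ)]
  rw [sum_mulVec]
  rw [show toE (∑ k ∈ Finset.range (d+1), (q.coeff k • G.adjMatrix ℝ ^ k).mulVec (rho ν C))
      = ∑ k ∈ Finset.range (d+1), toE ((q.coeff k • G.adjMatrix ℝ ^ k).mulVec (rho ν C)) from by simp [toE]]
  rw [sum_inner, Finset.sum_range_succ]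
  have hzero : ∀ k ∈ Finset.range d,
      ⟪toE ((q.coeff k • G.adjMatrix ℝ ^ k).mulVec (rho ν C)), rho ν (subcons G C d)⟫ = 0 := by
    intro k hk
    rw [Matrix.smul_mulVec,
      show toE (q.coeff k • (G.adjMatrix ℝ ^ k).mulVec (rho ν C))
        = q.coeff k • toE ((G.adjMatrix ℝ ^ k).mulVec (rho ν C)) from rfl,
      real_inner_smul_left, inner_pow_rho_zero ν (Finset.mem_range.1 hk), mul_zero]
  rw [Finset.sum_eq_zero hzero, zero_add, Matrix.smul_mulVec,
    show toE (q.coeff d • (G.adjMatrix ℝ ^ d).mulVec (rho ν C))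
      = q.coeff d • toE ((G.adjMatrix ℝ ^ d).mulVec (rho ν C)) from rfl,
    real_inner_smul_left]

section Perron
variable {G : SimpleGraph (Fin n)} [DecidableRel G.Adj] {ν : EuclideanSpace ℝ (Fin n)} {lam0 : ℝ}

lemma adj_entry_symm (i j : Fin n) : G.adjMatrix ℝ i j = G.adjMatrix ℝ j i := by
  simp [SimpleGraph.adjMatrix_apply, G.adj_comm]

lemma eig_le_lam0 (hν : ∀ i, 0 < ν i) (hPerron : (G.adjMatrix ℝ).mulVec ν = lam0 • ν)
    {t : ℝ} {w : EuclideanSpace ℝ (Fin n)} (hw : (G.adjMatrix ℝ).mulVec w = t • w)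
    (hw0 : w ≠ 0) : t ≤ lam0 := by
  set A := G.adjMatrix ℝ with hAdef
  set w' : Fin n → ℝ := fun i => |w i| with hw'
  set s : ℝ := ∑ i, ν i * w' i with hs
  have hspos : 0 < s := by
    obtain ⟨i0, hi0⟩ : ∃ i, w i ≠ 0 := by
      by_contra hc
      push_neg at hc
      exact hw0 (by ext i; simpa using hc i)
    apply Finset.sum_pos' (fun i _ => mul_nonneg (hν i).le (abs_nonneg _))
    exact ⟨i0, Finset.mem_univ i0, mul_pos (hν i0) (abs_pos.2 hi0)⟩
  have hentry : ∀ i j, (0:ℝ) ≤ A i j := by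
    intro i j; rw [hAdef]; simp [SimpleGraph.adjMatrix_apply]; positivity
  have key : |t| * s ≤ lam0 * s := by
    have h1 : ∀ i, |t| * w' i ≤ A.mulVec w' i := by
      intro i
      have : (A.mulVec w) i = t * w i := by rw [hw]; rfl
      have habs : |t| * w' i = |(A.mulVec w) i| := by
        rw [this, hw', abs_mul]
      rw [habs, Matrix.mulVec, dotProduct]
      calc |∑ j, A i j * w j| ≤ ∑ j, |A i j * w j| := Finset.abs_sum_le_sum_abs _ _
        _ = ∑ j, A i j * w' j := by
              apply Finset.sum_congr rfl
              intro j _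
              rw [abs_mul, abs_of_nonneg (hentry i j)]
    have h2 : |t| * s ≤ ∑ i, ν i * (A.mulVec w') i := by
      rw [hs, Finset.mul_sum]
      apply Finset.sum_le_sum
      intro i _
      nlinarith [h1 i, (hν i).le]
    have h3 : ∑ i, ν i * (A.mulVec w') i = lam0 * s := by
      have hswap : ∑ i, ν i * (A.mulVec w') i = ∑ j, (A.mulVec ν) j * w' j := by
        simp only [Matrix.mulVec, dotProduct, Finset.mul_sum, Finset.sum_mul]
        rw [Finset.sum_comm]
        apply Finset.sum_congr rfl
        intro j _
        apply Finset.sum_congr rfl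
        intro i _
        rw [show A i j = A j i by rw [hAdef]; exact adj_entry_symm i j]
        ring
      rw [hswap, hs, Finset.mul_sum]
      apply Finset.sum_congr rfl
      intro j _
      have : (A.mulVec ν) j = lam0 * ν j := by rw [hPerron]; rfl
      rw [this]; ring
    calc |t| * s ≤ ∑ i, ν i * (A.mulVec w') i := h2
      _ = lam0 * s := h3
  have : t * s ≤ lam0 * s := le_trans (mul_le_mul_of_nonneg_right (le_abs_self t) hspos.le) key
  exact le_of_mul_le_mul_right this hspos

lemma perron_eigenspace (hn : 0 < n) (hconn : G.Connected) (hν : ∀ i, 0 < ν i)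
    (hPerron : (G.adjMatrix ℝ).mulVec ν = lam0 • ν) :
    eigSp (G.adjMatrix ℝ) lam0 = (ℝ ∙ ν : Submodule ℝ (EuclideanSpace ℝ (Fin n))) := by
  set A := G.adjMatrix ℝ with hAdef
  apply le_antisymm
  · intro w hw
    rw [mem_eigSp] at hw
    have hne : (Finset.univ : Finset (Fin n)).Nonempty := by
      have : Nonempty (Fin n) := ⟨⟨0, hn⟩⟩
      exact Finset.univ_nonempty
    set t := Finset.univ.inf' hne (fun i => w i / ν i) with ht
    set u : Fin n → ℝ := fun i => w i - t * ν i with hu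
    have hu0 : ∀ i, 0 ≤ u i := by
      intro i
      have h1 : t ≤ w i / ν i := Finset.inf'_le _ (Finset.mem_univ i)
      rw [hu]
      simp only
      nlinarith [hν i, (le_div_iff₀ (hν i)).1 h1]
    have hAu : A.mulVec u = fun i => lam0 * u i := by
      have : u = fun i => w i - t * ν i := rfl
      funext i
      have hmv : A.mulVec u = A.mulVec w - t • A.mulVec ν := by
        rw [hu]
        have : (fun i => w i - t * ν i) = (w : Fin n → ℝ) - t • (ν : Fin n → ℝ) := by
          funext i; simp [Pi.sub_apply]
        rw [this, Matrix.mulVec_sub, Matrix.mulVec_smul]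
      rw [hmv]
      have h1 : (A.mulVec w) i = lam0 * w i := by rw [hw]; rfl
      have h2 : (A.mulVec ν) i = lam0 * ν i := by rw [hPerron]; rfl
      simp [h1, h2, hu]
      ring
    obtain ⟨i0, -, hi0⟩ := Finset.exists_mem_eq_inf' hne (fun i => w i / ν i)
    have hui0 : u i0 = 0 := by
      rw [hu]
      simp only
      rw [ht, hi0]
      rw [div_mul_eq_mul_div, mul_div_assoc, div_self (hν i0).ne', mul_one, sub_self]
    have hstep : ∀ i, u i = 0 → ∀ j, G.Adj i j → u j = 0 := by
      intro i hi j hij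
      have hsum : ∑ j, A i j * u j = 0 := by
        have : (A.mulVec u) i = lam0 * u i := congrFun hAu i
        rw [hi, mul_zero] at this
        rw [← this, Matrix.mulVec, dotProduct]
      have hnn : ∀ j ∈ Finset.univ, 0 ≤ A i j * u j := by
        intro j _
        apply mul_nonneg _ (hu0 j)
        rw [hAdef]; simp [SimpleGraph.adjMatrix_apply]; positivity
      have := (Finset.sum_eq_zero_iff_of_nonneg hnn).1 hsum j (Finset.mem_univ j)
      rw [hAdef] at this
      simp [SimpleGraph.adjMatrix_apply, hij] at this
      exact this
    have hwalk : ∀ (x y : Fin n), G.Walk x y → u x = 0 → u y = 0 := by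
      intro x y p
      induction p with
      | nil => exact id
      | @cons a b c hab p ih => exact fun hx => ih (hstep _ hx _ hab)
    have hall : ∀ j, u j = 0 := by
      intro j
      obtain ⟨p⟩ := (hconn i0 j)
      exact hwalk i0 j p hui0
    have hwt : w = t • ν := by
      ext i
      have := hall i
      rw [hu] at this
      simp only at this
      have : w i = t * ν i := by linarith
      simpa using this
    rw [Submodule.mem_span_singleton]
    exact ⟨t, hwt.symm⟩
  · rw [Submodule.span_singleton_le_iff_mem]
    rw [mem_eigSp]
    exact hPerron

end Perron

lemma normsq_rho (ν : EuclideanSpace ℝ (Fin n)) (S : Finset (Fin n)) :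
    ‖rho ν S‖ ^ 2 = ∑ i ∈ S, (ν i) ^ 2 := by
  rw [← real_inner_self_eq_norm_sq]
  rw [show ⟪rho ν S, rho ν S⟫ = ∑ i, (rho ν S) i * (rho ν S) i from by
    simp only [PiLp.inner_apply, RCLike.inner_apply, conj_trivial]]
  rw [show (∑ i, (rho ν S) i * (rho ν S) i) = ∑ i, if i ∈ S then (ν i)^2 else 0 from
    Finset.sum_congr rfl fun i _ => by by_cases h : i ∈ S <;> simp [rho, h, sq]]
  rw [Finset.sum_ite_mem, Finset.univ_inter]

lemma inner_nu_rho (ν : EuclideanSpace ℝ (Fin n)) (S : Finset (Fin n)) :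
    ⟪ν, rho ν S⟫ = ∑ i ∈ S, (ν i) ^ 2 := by
  rw [show ⟪ν, rho ν S⟫ = ∑ i, ν i * (rho ν S) i from by simp [PiLp.inner_apply, mul_comm]]
  rw [show (∑ i, ν i * (rho ν S) i) = ∑ i, if i ∈ S then (ν i)^2 else 0 from
    Finset.sum_congr rfl fun i _ => by by_cases h : i ∈ S <;> simp [rho, h, sq]]
  rw [Finset.sum_ite_mem, Finset.univ_inter]

lemma eigProj_smul (A : Matrix (Fin n) (Fin n) ℝ) (μ : ℝ) (a : ℝ) (v : EuclideanSpace ℝ (Fin n)) :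
    eigProj A μ (a • v) = a • eigProj A μ v := by
  simp [eigProj]

lemma eigProj_mem (A : Matrix (Fin n) (Fin n) ℝ) (μ : ℝ) (v : EuclideanSpace ℝ (Fin n)) :
    eigProj A μ v ∈ eigSp A μ := (Submodule.orthogonalProjectionOnto (eigSp A μ) v).2

set_option maxHeartbeats 1000000 in
theorem multiplicity_product_equality_iff_dependent {n : ℕ} (hn : 0 < n) (G : SimpleGraph (Fin n)) [DecidableRel G.Adj]
    (hconn : G.Connected)
    (ν : EuclideanSpace ℝ (Fin n)) (hν : ∀ i, 0 < ν i) (lam0 : ℝ)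
    (hPerron : (G.adjMatrix ℝ).mulVec ν = lam0 • ν)
    (C : Finset (Fin n)) (hC : C.Nonempty)
    (d : ℕ) (μ : Fin (d + 1) → ℝ) (hμa : StrictAnti μ)
    (hμr : Set.range μ = evloc (G.adjMatrix ℝ) ν C)
    (hext : eccS G C = d) :
    ∀ l : Fin (d + 1),
      (mloc (G.adjMatrix ℝ) ν C (μ l) * mloc (G.adjMatrix ℝ) ν (subcons G C (eccS G C)) (μ l)
        = (piC μ 0) ^ 2 / (piC μ l) ^ 2 *
            (‖rho ν C‖ ^ 2 * ‖rho ν (subcons G C (eccS G C))‖ ^ 2 / ‖ν‖ ^ 4))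
      ↔ ¬ LinearIndependent ℝ
          ![eigProj (G.adjMatrix ℝ) (μ l) (unitVec ν C),
            eigProj (G.adjMatrix ℝ) (μ l) (unitVec ν (subcons G C (eccS G C)))] := by
  intro l
  have hA : (G.adjMatrix ℝ).IsHermitian := by
    ext i j
    simp [Matrix.conjTranspose_apply, SimpleGraph.adjMatrix_apply, G.adj_comm i j]
  simp only [hext]
  set A := G.adjMatrix ℝ with hAdef
  set D := subcons G C d with hDdef
  set ρC := rho ν C with hρCdef
  set ρD := rho ν D with hρDdef
  -- basic positivity
  have hDne : D.Nonempty := by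
    obtain ⟨iD, -, hiD⟩ := Finset.exists_mem_eq_sup Finset.univ
      ⟨⟨0, hn⟩, Finset.mem_univ _⟩ (dSet G C)
    refine ⟨iD, ?_⟩
    rw [hDdef, subcons, Finset.mem_filter]
    exact ⟨Finset.mem_univ _, by rw [← hiD]; exact hext⟩
  have hnC : 0 < ‖ρC‖ := by
    have h1 : 0 < ‖ρC‖^2 := by
      rw [hρCdef, normsq_rho]
      exact Finset.sum_pos (fun i _ => pow_pos (hν i) 2) hC
    have := norm_nonneg ρC
    nlinarith
  have hnD : 0 < ‖ρD‖ := by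
    have h1 : 0 < ‖ρD‖^2 := by
      rw [hρDdef, normsq_rho]
      exact Finset.sum_pos (fun i _ => pow_pos (hν i) 2) hDne
    have := norm_nonneg ρD
    nlinarith
  have hν0 : ν ≠ 0 := by
    intro h
    have h2 := hν ⟨0, hn⟩
    rw [h] at h2
    simp at h2
  have hnν : 0 < ‖ν‖ := norm_pos_iff.2 hν0
  -- Perron eigenspace
  have hsp := perron_eigenspace hn hconn hν hPerron
  have hprojlam : ∀ v, eigProj A lam0 v = (⟪ν, v⟫ / ‖ν‖^2) • ν := by
    intro v
    have key : ∀ K : Submodule ℝ (EuclideanSpace ℝ (Fin n)), K = (ℝ ∙ ν) →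
        ∀ [K.HasOrthogonalProjection], K.starProjection v = (ℝ ∙ ν).starProjection v := by
      rintro K rfl _; rfl
    rw [eigProj, Submodule.coe_orthogonalProjectionOnto_apply, key _ hsp, Submodule.starProjection_singleton]
    norm_num
  have hinnerC : ⟪ν, ρC⟫ = ‖ρC‖^2 := by rw [hρCdef, inner_nu_rho, normsq_rho]
  have hinnerD : ⟪ν, ρD⟫ = ‖ρD‖^2 := by rw [hρDdef, inner_nu_rho, normsq_rho]
  -- μ 0 = lam0
  have hμ0 : μ 0 = lam0 := by
    have h1 : μ 0 ≤ lam0 := by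
      have hr : μ 0 ∈ evloc A ν C := by rw [← hμr]; exact Set.mem_range_self 0
      have hw0 : eigProj A (μ 0) ρC ≠ 0 := hr
      exact eig_le_lam0 hν hPerron (mem_eigSp.1 (eigProj_mem A (μ 0) ρC)) hw0
    have h2 : lam0 ∈ Set.range μ := by
      rw [hμr]
      show eigProj A lam0 ρC ≠ 0
      rw [hprojlam]
      intro h
      rcases smul_eq_zero.1 h with h' | h'
      · rw [hinnerC] at h'
        have : ‖ρC‖^2 / ‖ν‖^2 ≠ 0 := by positivity
        exact this h'
      · exact hν0 h'
    obtain ⟨h0, hh0⟩ := h2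
    have h3 : lam0 ≤ μ 0 := by rw [← hh0]; exact hμa.antitone (Fin.zero_le h0)
    linarith
  -- coefficient vanishing outside local spectrum
  have hcoeffC : ∀ i : Fin n, hA.eigenvalues i ∉ Set.range μ →
      ⟪(hA.eigenvectorBasis i : EuclideanSpace ℝ (Fin n)), ρC⟫ = 0 := by
    intro i hi
    apply coeff_eq_zero_of_eigProj_eq_zero hA
    by_contra hne
    have : hA.eigenvalues i ∈ evloc A ν C := hne
    rw [← hμr] at this
    exact hi this
  -- the polynomials
  set P : Fin (d+1) → Polynomial ℝ :=
    fun l' => ∏ h ∈ Finset.univ.erase l', (Polynomial.X - Polynomial.C (μ h)) with hPdef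
  have hPdeg : ∀ l', (P l').natDegree = d := by
    intro l'
    rw [hPdef]
    simp only
    rw [Polynomial.natDegree_prod _ _ (fun h _ => Polynomial.X_sub_C_ne_zero (μ h))]
    simp [Polynomial.natDegree_X_sub_C, Finset.card_erase_of_mem]
  have hPmonic : ∀ l', (P l').Monic := by
    intro l'
    exact Polynomial.monic_prod_of_monic _ _ (fun h _ => Polynomial.monic_X_sub_C (μ h))
  have hPcoeffd : ∀ l', (P l').coeff d = 1 := by
    intro l'
    have := (hPmonic l').coeff_natDegree
    rwa [hPdeg l'] at this
  have hPeval : ∀ l' x, (P l').eval x = ∏ h ∈ Finset.univ.erase l', (x - μ h) := by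
    intro l' x
    rw [hPdef]
    simp [Polynomial.eval_prod]
  have hPevalne : ∀ l', (P l').eval (μ l') ≠ 0 := by
    intro l'
    rw [hPeval]
    apply Finset.prod_ne_zero_iff.2
    intro h hh
    have : h ≠ l' := Finset.ne_of_mem_erase hh
    intro he
    have : μ h = μ l' := by linarith [sub_eq_zero.1 he]
    exact (Finset.ne_of_mem_erase hh) (hμa.injective this)
  -- key spectral identity
  have KeyL : ∀ l' : Fin (d+1),
      ⟪toE ((Polynomial.aeval A (P l')).mulVec ρC), ρD⟫
        = (P l').eval (μ l') * ⟪eigProj A (μ l') ρC, eigProj A (μ l') ρD⟫ := by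
    intro l'
    rw [inner_aeval_spectral hA, inner_eigProj hA, Finset.mul_sum, Finset.sum_filter]
    apply Finset.sum_congr rfl
    intro i _
    by_cases hi : hA.eigenvalues i = μ l'
    · rw [if_pos hi, hi]
    · rw [if_neg hi]
      by_cases hr : hA.eigenvalues i ∈ Set.range μ
      · obtain ⟨h, hh⟩ := hr
        have hne : h ≠ l' := fun he => hi (he ▸ hh ▸ rfl)
        have : (P l').eval (hA.eigenvalues i) = 0 := by
          rw [hPeval]
          apply Finset.prod_eq_zero (Finset.mem_erase.2 ⟨hne, Finset.mem_univ h⟩)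
          rw [← hh, sub_self]
        rw [this, zero_mul]
      · rw [hcoeffC i hr, zero_mul, mul_zero]
  -- the combinatorial identity: both polynomials give the same pairing
  have hcomb : ∀ l' : Fin (d+1),
      ⟪toE ((Polynomial.aeval A (P l')).mulVec ρC), ρD⟫
        = ⟪toE ((A ^ d).mulVec ρC), ρD⟫ := by
    intro l'
    rw [hρCdef, hρDdef, hDdef]
    rw [inner_aeval_rho ν (hPdeg l').le, hPcoeffd l', one_mul]
  -- central equation
  set Zl := ⟪eigProj A (μ l) ρC, eigProj A (μ l) ρD⟫ with hZl
  set Z0 := ⟪eigProj A (μ 0) ρC, eigProj A (μ 0) ρD⟫ with hZ0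
  have hmain : (P l).eval (μ l) * Zl = (P 0).eval (μ 0) * Z0 := by
    rw [hZl, hZ0, ← KeyL l, ← KeyL 0, hcomb l, hcomb 0]
  -- value of Z0
  have hprojC0 : eigProj A (μ 0) ρC = (‖ρC‖^2 / ‖ν‖^2) • ν := by
    rw [hμ0, hprojlam, hinnerC]
  have hprojD0 : eigProj A (μ 0) ρD = (‖ρD‖^2 / ‖ν‖^2) • ν := by
    rw [hμ0, hprojlam, hinnerD]
  have hZ0val : Z0 = ‖ρC‖^2 * ‖ρD‖^2 / ‖ν‖^2 := by
    rw [hZ0, hprojC0, hprojD0, real_inner_smul_left, real_inner_smul_right,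
      real_inner_self_eq_norm_sq]
    field_simp
  -- the unit-level projections
  set zC := eigProj A (μ l) (unitVec ν C) with hzCdef
  set zD := eigProj A (μ l) (unitVec ν D) with hzDdef
  have hzCs : zC = ‖ρC‖⁻¹ • eigProj A (μ l) ρC := by
    rw [hzCdef, unitVec, eigProj_smul, hρCdef]
  have hzDs : zD = ‖ρD‖⁻¹ • eigProj A (μ l) ρD := by
    rw [hzDdef, unitVec, eigProj_smul, hρDdef]
  set a := ⟪zC, zD⟫ with hadef
  have haval : a = ‖ρC‖⁻¹ * ‖ρD‖⁻¹ * Zl := by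
    rw [hadef, hzCs, hzDs, real_inner_smul_left, real_inner_smul_right, hZl]
    ring
  -- key scalar relation
  have hrel : a * ((P l).eval (μ l) * ‖ν‖^2) = (P 0).eval (μ 0) * (‖ρC‖ * ‖ρD‖) := by
    have h1 : (P l).eval (μ l) * Zl * ‖ν‖^2 = (P 0).eval (μ 0) * (‖ρC‖^2 * ‖ρD‖^2) := by
      rw [hmain, hZ0val]
      field_simp
    apply mul_left_cancel₀ (show ‖ρC‖ * ‖ρD‖ ≠ 0 by positivity)
    rw [haval]
    field_simp
    linear_combination h1
  have hP0pos : 0 < (P 0).eval (μ 0) := by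
    rw [hPeval]
    apply Finset.prod_pos
    intro h hh
    have h0 : (0 : Fin (d+1)) < h := by
      rcases Finset.mem_erase.1 hh with ⟨hne, -⟩
      exact lt_of_le_of_ne (Fin.zero_le h) (Ne.symm hne)
    have := hμa h0
    linarith
  have ha0 : a ≠ 0 := by
    intro h
    rw [h, zero_mul] at hrel
    have hpos : 0 < (P 0).eval (μ 0) * (‖ρC‖ * ‖ρD‖) := by positivity
    rw [← hrel] at hpos
    exact lt_irrefl _ hpos
  -- squares of the polynomial values equal squares of piC
  have hsq : ∀ l', ((P l').eval (μ l'))^2 = (piC μ l')^2 := by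
    intro l'
    rw [hPeval, piC, ← Finset.prod_pow, ← Finset.prod_pow]
    apply Finset.prod_congr rfl
    intro h _
    rw [sq_abs]
  -- the constant equals a^2
  have hconst : (piC μ 0)^2 / (piC μ l)^2 * (‖ρC‖^2 * ‖ρD‖^2 / ‖ν‖^4) = a^2 := by
    have h2 : (a * ((P l).eval (μ l) * ‖ν‖^2))^2 = ((P 0).eval (μ 0) * (‖ρC‖ * ‖ρD‖))^2 := by
      rw [hrel]
    rw [← hsq 0, ← hsq l]
    have hl2 : ((P l).eval (μ l)) ≠ 0 := hPevalne l
    field_simp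
    linear_combination -h2
  -- now the iff
  rw [hconst]
  show (‖zC‖^2 * ‖zD‖^2 = a^2) ↔ ¬ LinearIndependent ℝ ![zC, zD]
  constructor
  · intro h2
    have hzC0 : zC ≠ 0 := by
      intro h
      exact ha0 (by rw [hadef, h, inner_zero_left])
    have hzD0 : zD ≠ 0 := by
      intro h
      exact ha0 (by rw [hadef, h, inner_zero_right])
    have hn2 : ‖(⟪zC, zD⟫ : ℝ)‖ = ‖zC‖ * ‖zD‖ := by
      rw [Real.norm_eq_abs, ← hadef]
      have h3 : |a|^2 = (‖zC‖ * ‖zD‖)^2 := by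
        rw [sq_abs, ← h2]; ring
      nlinarith [abs_nonneg a, mul_nonneg (norm_nonneg zC) (norm_nonneg zD)]
    obtain ⟨r, hr0, hr⟩ := (norm_inner_eq_norm_iff hzC0 hzD0).1 hn2
    intro hLI
    rw [linearIndependent_fin2] at hLI
    obtain ⟨h1', h2'⟩ := hLI
    simp only [Matrix.cons_val_one, Matrix.head_cons, Matrix.cons_val_zero] at h1' h2'
    exact h2' r⁻¹ (by rw [hr, inv_smul_smul₀ hr0])
  · intro hdep
    rw [linearIndependent_fin2] at hdep
    push_neg at hdep
    simp only [Matrix.cons_val_one, Matrix.head_cons, Matrix.cons_val_zero] at hdep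
    rcases eq_or_ne zD 0 with hz | hz
    · exact absurd (by rw [hadef, hz, inner_zero_right]) ha0
    · obtain ⟨t, ht⟩ := hdep hz
      have h1 : ‖zC‖^2 = t^2 * ‖zD‖^2 := by
        rw [← ht, norm_smul, mul_pow, Real.norm_eq_abs, sq_abs]
      have h2 : a = t * ‖zD‖^2 := by
        rw [hadef, ← ht, real_inner_smul_left, real_inner_self_eq_norm_sq]
      rw [h1, h2]
      ring
end
end

section
/- Let C be a completely pseudo-regular code in a finite simple connected graph Γ with antipodal set D, which is also a completely pseudo-regular code with C as its antipodal set. If p_{d_C} is the C-local predistance polynomial of maximum degree and p̄ the D-local predistance polynomial of maximum degree, then p̄(μ_l) = 1/p_{d_C}(μ_l) for every μ_l in the C-local spectrum. -/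
open Finset Polynomial BigOperators
open scoped Classical

noncomputable section

lemma eigProj_linear_add {n : ℕ} (A : Matrix (Fin n) (Fin n) ℝ) (μ : ℝ)
    (x y : EuclideanSpace ℝ (Fin n)) :
    eigProj A μ (x + y) = eigProj A μ x + eigProj A μ y := by
  unfold eigProj
  rw [map_add]; rfl

lemma eigProj_linear_smul {n : ℕ} (A : Matrix (Fin n) (Fin n) ℝ) (μ : ℝ) (c : ℝ)
    (x : EuclideanSpace ℝ (Fin n)) :
    eigProj A μ (c • x) = c • eigProj A μ x := by
  unfold eigProj
  rw [map_smul]; rfl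

lemma eigProj_mulVec {n : ℕ} {A : Matrix (Fin n) (Fin n) ℝ} (hA : A.IsHermitian) (μ : ℝ)
    (v : EuclideanSpace ℝ (Fin n)) :
    eigProj A μ (WithLp.toLp 2 (A.mulVec v)) = μ • eigProj A μ v := by
  have hT : (Matrix.toEuclideanLin A).IsSymmetric :=
    (Matrix.isHermitian_iff_isSymmetric).mp hA
  set T := Matrix.toEuclideanLin A with hTdef
  set E := eigSp A μ with hE
  have hTv : (WithLp.toLp 2 (A.mulVec v) : EuclideanSpace ℝ (Fin n)) = T v := rfl
  have hdec : (WithLp.toLp 2 (A.mulVec v) : EuclideanSpace ℝ (Fin n))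
      = μ • (Submodule.orthogonalProjectionOnto E v : EuclideanSpace ℝ (Fin n))
        + T (v - (Submodule.orthogonalProjectionOnto E v : EuclideanSpace ℝ (Fin n))) := by
    rw [hTv, map_sub]
    have h1 : T (Submodule.orthogonalProjectionOnto E v : EuclideanSpace ℝ (Fin n))
        = μ • (Submodule.orthogonalProjectionOnto E v : EuclideanSpace ℝ (Fin n)) := by
      have hm := (Submodule.orthogonalProjectionOnto E v).2
      rw [hE, eigSp, ← hTdef] at hm
      exact Module.End.mem_eigenspace_iff.mp hm
    rw [← h1]; abel
  rw [hdec, eigProj_linear_add, eigProj_linear_smul]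
  have h2 : v - (Submodule.orthogonalProjectionOnto E v : EuclideanSpace ℝ (Fin n)) ∈ Eᗮ :=
    Submodule.sub_starProjection_mem_orthogonal v
  have h3 : T (v - (Submodule.orthogonalProjectionOnto E v : EuclideanSpace ℝ (Fin n))) ∈ Eᗮ :=
    hT.invariant_orthogonalComplement_eigenspace μ _ h2
  have h4 : eigProj A μ (T (v - (Submodule.orthogonalProjectionOnto E v : EuclideanSpace ℝ (Fin n)))) = 0 := by
    unfold eigProj
    rw [Submodule.orthogonalProjectionOnto_apply_of_mem_orthogonal h3]
    rfl
  rw [h4, add_zero]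
  have h5 : eigProj A μ ((Submodule.orthogonalProjectionOnto E v : EuclideanSpace ℝ (Fin n)))
      = eigProj A μ v := by
    unfold eigProj
    rw [Submodule.orthogonalProjectionOnto_mem_subspace_eq_self]
  rw [h5]

lemma eigProj_powVec {n : ℕ} {A : Matrix (Fin n) (Fin n) ℝ} (hA : A.IsHermitian) (μ : ℝ)
    (k : ℕ) (v : EuclideanSpace ℝ (Fin n)) :
    eigProj A μ (WithLp.toLp 2 ((A ^ k).mulVec v)) = μ ^ k • eigProj A μ v := by
  induction k with
  | zero => simp [Matrix.one_mulVec]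
  | succ k ih =>
    have : (A ^ (k + 1)).mulVec v = A.mulVec ((A ^ k).mulVec v) := by
      rw [Matrix.mulVec_mulVec, ← pow_succ']
    have hm := eigProj_mulVec hA μ (WithLp.toLp 2 ((A ^ k).mulVec v))
    rw [WithLp.ofLp_toLp] at hm
    rw [this, hm, ih, smul_smul, ← pow_succ']

lemma eigProj_aevalVec {n : ℕ} {A : Matrix (Fin n) (Fin n) ℝ} (hA : A.IsHermitian) (μ : ℝ)
    (r : Polynomial ℝ) (v : EuclideanSpace ℝ (Fin n)) :
    eigProj A μ (aevalVec A r v) = r.eval μ • eigProj A μ v := by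
  induction r using Polynomial.induction_on' with
  | add f g hf hg =>
    have : aevalVec A (f + g) v = aevalVec A f v + aevalVec A g v := by
      unfold aevalVec
      rw [map_add, Matrix.add_mulVec, WithLp.toLp_add]
    rw [this, eigProj_linear_add, hf, hg, Polynomial.eval_add, add_smul]
  | monomial k a =>
    have : aevalVec A (Polynomial.monomial k a) v = a • WithLp.toLp 2 ((A ^ k).mulVec v) := by
      unfold aevalVec
      rw [Polynomial.aeval_monomial]
      rw [Algebra.algebraMap_eq_smul_one, smul_mul_assoc, one_mul,
        Matrix.smul_mulVec, WithLp.toLp_smul]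
    rw [this, eigProj_linear_smul, eigProj_powVec hA, Polynomial.eval_monomial,
      smul_smul, mul_comm]

theorem reciprocal_predistance_polynomials {n : ℕ} (hn : 0 < n) (G : SimpleGraph (Fin n)) [DecidableRel G.Adj]
    (hconn : G.Connected)
    (ν : EuclideanSpace ℝ (Fin n)) (hν : ∀ i, 0 < ν i) (lam0 : ℝ)
    (hPerron : (G.adjMatrix ℝ).mulVec ν = lam0 • ν)
    (C : Finset (Fin n)) (hC : C.Nonempty)
    (d : ℕ) (hd : d + 1 = (evloc (G.adjMatrix ℝ) ν C).ncard)
    (p : ℕ → Polynomial ℝ)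
    (hdeg : ∀ k ≤ d, (p k).natDegree = k)
    (horth : ∀ k ≤ d, ∀ h ≤ d, k ≠ h →
      (inner ℝ (aevalVec (G.adjMatrix ℝ) (p k) (unitVec ν C))
             (aevalVec (G.adjMatrix ℝ) (p h) (unitVec ν C)) : ℝ) = 0)
    (hnorm : ∀ k ≤ d,
      (inner ℝ (aevalVec (G.adjMatrix ℝ) (p k) (unitVec ν C))
             (aevalVec (G.adjMatrix ℝ) (p k) (unitVec ν C)) : ℝ) = (p k).eval lam0)
    (hcode : ∀ k ≤ eccS G C, rho ν (subcons G C k) = aevalVec (G.adjMatrix ℝ) (p k) (rho ν C))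
    (μ : Fin (d + 1) → ℝ) (hμa : StrictAnti μ)
    (hμr : Set.range μ = evloc (G.adjMatrix ℝ) ν C)
    (hext : eccS G C = d)
    (q : ℕ → Polynomial ℝ)
    (hqdeg : ∀ k ≤ d, (q k).natDegree = k)
    (hqorth : ∀ k ≤ d, ∀ h ≤ d, k ≠ h →
      (inner ℝ (aevalVec (G.adjMatrix ℝ) (q k) (unitVec ν (subcons G C (eccS G C))))
             (aevalVec (G.adjMatrix ℝ) (q h) (unitVec ν (subcons G C (eccS G C)))) : ℝ) = 0)
    (hqnorm : ∀ k ≤ d,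
      (inner ℝ (aevalVec (G.adjMatrix ℝ) (q k) (unitVec ν (subcons G C (eccS G C))))
             (aevalVec (G.adjMatrix ℝ) (q k) (unitVec ν (subcons G C (eccS G C)))) : ℝ) = (q k).eval lam0)
    (hqcode : ∀ k ≤ eccS G (subcons G C (eccS G C)),
      rho ν (subcons G (subcons G C (eccS G C)) k) = aevalVec (G.adjMatrix ℝ) (q k) (rho ν (subcons G C (eccS G C))))
    (hDecc : eccS G (subcons G C (eccS G C)) = d)
    (hDanti : subcons G (subcons G C (eccS G C)) (eccS G (subcons G C (eccS G C))) = C) :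
    ∀ l : Fin (d + 1), (q d).eval (μ l) = ((p d).eval (μ l))⁻¹ := by
  intro l
  set A := G.adjMatrix ℝ with hAdef
  have hA : A.IsHermitian := by
    ext i j
    simp [hAdef, Matrix.conjTranspose_apply, SimpleGraph.adjMatrix_apply,
      SimpleGraph.adj_comm]
  have hμl : μ l ∈ evloc A ν C := by
    rw [← hμr]; exact ⟨l, rfl⟩
  have hEl : eigProj A (μ l) (rho ν C) ≠ 0 := hμl
  have h1 := hcode (eccS G C) le_rfl
  have h2 := hqcode (eccS G (subcons G C (eccS G C))) le_rfl
  rw [hDanti] at h2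
  rw [hDecc] at h2
  rw [hext] at h1
  rw [hext] at h2
  rw [h1] at h2
  have hcomb : rho ν C = aevalVec A ((q d) * (p d)) (rho ν C) := by
    conv_lhs => rw [h2]
    unfold aevalVec
    rw [WithLp.ofLp_toLp, Matrix.mulVec_mulVec, ← map_mul]
  have hproj := congrArg (eigProj A (μ l)) hcomb
  rw [eigProj_aevalVec hA] at hproj
  have hc : ((q d * p d).eval (μ l) - 1) • eigProj A (μ l) (rho ν C) = 0 := by
    rw [sub_smul, one_smul, ← hproj, sub_self]
  rcases smul_eq_zero.mp hc with h | h
  · have h1' : (q d).eval (μ l) * (p d).eval (μ l) = 1 := by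
      have := sub_eq_zero.mp h
      rwa [Polynomial.eval_mul] at this
    exact eq_inv_of_mul_eq_one_left h1'
  · exact absurd h hEl
end
end
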